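/- Let X be a locally compact Hausdorff topological space and let f : X → ℝ be continuous with compact support. Then the smallest subalgebra of the algebra C_c(X) of compactly supported continuous real-valued functions on X that contains f and is closed with respect to the uniform norm equals the set {φ ∘ f | φ : ℝ → ℝ continuous, φ(0) = 0}. -/

import Mathlib

/-- `f : X → ℝ` is a compactly supported continuous function. -/
def IsCc {X : Type*} [TopologicalSpace X] (f : X → ℝ) : Prop :=
  Continuous f ∧ HasCompactSupport f

/-- The uniform norm of a function `f : X → ℝ`. -/
noncomputable def unif {X : Type*} (f : X → ℝ) : ℝ := ⨆ x, |f x|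

/-- `C(f) = {φ ∘ f | φ : ℝ → ℝ continuous, φ 0 = 0}`. -/
def Cf {X : Type*} (f : X → ℝ) : Set (X → ℝ) :=
  {g | ∃ φ : ℝ → ℝ, Continuous φ ∧ φ 0 = 0 ∧ g = φ ∘ f}

lemma IsCc.sub {X : Type*} [TopologicalSpace X] {g h : X → ℝ} (hg : IsCc g) (hh : IsCc h) :
    IsCc (g - h) := by
  refine ⟨hg.1.sub hh.1, ?_⟩
  rw [sub_eq_add_neg]
  have hn : HasCompactSupport (-h) := hh.2.comp_left (g := Neg.neg) neg_zero
  exact hg.2.add hn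

lemma abs_le_unif {X : Type*} [TopologicalSpace X] {u : X → ℝ} (hu : IsCc u) (x : X) :
    |u x| ≤ unif u := by
  have hb : BddAbove (Set.range fun y => |u y|) := by
    have : IsCompact (Set.range (abs ∘ u)) :=
      (hu.2.comp_left (g := abs) abs_zero).isCompact_range (hu.1.abs)
    exact this.bddAbove
  exact le_ciSup hb x

lemma isCc_comp {X : Type*} [TopologicalSpace X] {f : X → ℝ} (hf : IsCc f)
    {φ : ℝ → ℝ} (hφ : Continuous φ) (hφ0 : φ 0 = 0) : IsCc (φ ∘ f) :=
  ⟨hφ.comp hf.1, hf.2.comp_left hφ0⟩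

/-- The smallest subalgebra of `C_c(X)` containing `f` which is closed with respect to
the uniform norm equals `C(f) = {φ ∘ f | φ continuous, φ 0 = 0}`. -/
theorem smallest_closed_subalgebra_eq_Cf
    {X : Type*} [TopologicalSpace X] [LocallyCompactSpace X] [T2Space X]
    (f : X → ℝ) (hf : IsCc f) :
    ⋂₀ {S : Set (X → ℝ) |
        S ⊆ {g | IsCc g} ∧
        f ∈ S ∧
        (∀ g ∈ S, ∀ h ∈ S, g + h ∈ S) ∧
        (∀ (c : ℝ), ∀ g ∈ S, c • g ∈ S) ∧
        (∀ g ∈ S, ∀ h ∈ S, g * h ∈ S) ∧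
        (∀ g : X → ℝ, IsCc g → (∀ ε > 0, ∃ h ∈ S, unif (g - h) < ε) → g ∈ S)}
      = Cf f := by
  apply Set.Subset.antisymm
  · -- `⋂₀ ⊆ Cf f` : show `Cf f` belongs to the family.
    apply Set.sInter_subset_of_mem
    refine ⟨?_, ?_, ?_, ?_, ?_, ?_⟩
    · rintro g ⟨φ, hφ, hφ0, rfl⟩
      exact isCc_comp hf hφ hφ0
    · exact ⟨id, continuous_id, rfl, rfl⟩
    · rintro g ⟨φ, hφ, hφ0, rfl⟩ h ⟨χ, hχ, hχ0, rfl⟩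
      exact ⟨fun t => φ t + χ t, hφ.add hχ, by simp [hφ0, hχ0], rfl⟩
    · rintro c g ⟨φ, hφ, hφ0, rfl⟩
      exact ⟨fun t => c * φ t, continuous_const.mul hφ, by simp [hφ0], rfl⟩
    · rintro g ⟨φ, hφ, hφ0, rfl⟩ h ⟨χ, hχ, hχ0, rfl⟩
      exact ⟨fun t => φ t * χ t, hφ.mul hχ, by simp [hφ0], rfl⟩
    · -- closure under uniform approximation
      intro g hg happ
      -- approximation at every positive ε
      have happ' : ∀ ε > (0:ℝ), ∃ φ : ℝ → ℝ, Continuous φ ∧ φ 0 = 0 ∧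
          ∀ x, |g x - φ (f x)| < ε := by
        intro ε hε
        obtain ⟨h, ⟨φ, hφ, hφ0, rfl⟩, hlt⟩ := happ ε hε
        refine ⟨φ, hφ, hφ0, fun x => ?_⟩
        have := abs_le_unif (hg.sub (isCc_comp hf hφ hφ0)) x
        simpa using this.trans_lt hlt
      -- g is constant on fibers of f, and vanishes where f does
      have hfiber : ∀ x y, f x = f y → g x = g y := by
        intro x y hxy
        by_contra hne
        have hpos : 0 < |g x - g y| := by
          simpa [sub_eq_zero] using abs_pos.mpr (sub_ne_zero.mpr hne)
        obtain ⟨φ, hφ, hφ0, hφap⟩ := happ' (|g x - g y| / 2) (by positivity)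
        have h1 := hφap x
        have h2 := hφap y
        rw [hxy] at h1
        have : |g x - g y| < |g x - g y| := by
          calc |g x - g y| = |(g x - φ (f y)) - (g y - φ (f y))| := by ring_nf
            _ ≤ |g x - φ (f y)| + |g y - φ (f y)| := abs_sub _ _
            _ < |g x - g y| / 2 + |g x - g y| / 2 := by linarith
            _ = |g x - g y| := by ring
        exact lt_irrefl _ this
      have hzero : ∀ x, f x = 0 → g x = 0 := by
        intro x hx
        by_contra hne
        have hpos : 0 < |g x| := abs_pos.mpr hne
        obtain ⟨φ, hφ, hφ0, hφap⟩ := happ' (|g x|) hpos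
        have := hφap x
        rw [hx, hφ0, sub_zero] at this
        exact lt_irrefl _ this
      -- choose a sequence of approximants
      have hseq : ∀ n : ℕ, ∃ φ : ℝ → ℝ, Continuous φ ∧ φ 0 = 0 ∧
          ∀ x, |g x - φ (f x)| < 1 / (n + 1) := fun n =>
        happ' (1 / (n + 1)) (by positivity)
      choose Φ hΦc hΦ0 hΦap using hseq
      classical
      -- the induced function on the range of f
      set ψ : ℝ → ℝ := fun t => if h : t ∈ Set.range f then g h.choose else 0 with hψdef
      have hψf : ∀ x, ψ (f x) = g x := by
        intro x
        have hm : f x ∈ Set.range f := ⟨x, rfl⟩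
        rw [hψdef]
        simp only [hm, dif_pos]
        exact hfiber _ _ hm.choose_spec
      have hψ0 : ψ 0 = 0 := by
        rw [hψdef]
        by_cases h : (0:ℝ) ∈ Set.range f
        · simp only [h, dif_pos]
          exact hzero _ h.choose_spec
        · simp [h]
      set K : Set ℝ := Set.range f ∪ {0} with hKdef
      have hKcomp : IsCompact K := (hf.2.isCompact_range hf.1).union isCompact_singleton
      have hKclosed : IsClosed K := hKcomp.isClosed
      have h0K : (0:ℝ) ∈ K := Or.inr rfl
      -- uniform bounds on K
      have hbound : ∀ n : ℕ, ∀ t ∈ K, |ψ t - Φ n t| ≤ 1 / (n + 1) := by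
        intro n t ht
        rcases ht with ⟨x, rfl⟩ | rfl
        · rw [hψf]
          exact (hΦap n x).le
        · rw [hψ0, hΦ0, sub_zero, abs_zero]
          positivity
      -- ψ is continuous on K as a uniform limit
      have hunif : TendstoUniformlyOn (fun n t => Φ n t) ψ Filter.atTop K := by
        rw [Metric.tendstoUniformlyOn_iff]
        intro ε hε
        obtain ⟨N, hN⟩ := exists_nat_gt (1 / ε)
        filter_upwards [Filter.eventually_ge_atTop N] with n hn t ht
        have h1 : (1:ℝ) / (n + 1) < ε := by
          rw [div_lt_iff₀ (by positivity)]
          have : 1 / ε < (n:ℝ) + 1 := hN.trans_le (by exact_mod_cast le_of_lt (Nat.lt_succ_of_le hn))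
          rw [div_lt_iff₀ hε] at this
          linarith
        calc dist (ψ t) (Φ n t) = |ψ t - Φ n t| := Real.dist_eq _ _
          _ ≤ 1 / (n + 1) := hbound n t ht
          _ < ε := h1
      have hψcont : ContinuousOn ψ K :=
        hunif.continuousOn (Filter.Frequently.of_forall fun n => (hΦc n).continuousOn)
      -- extend ψ from K to ℝ by Tietze
      obtain ⟨G, hG⟩ := ContinuousMap.exists_restrict_eq (Y := ℝ) hKclosed
        ⟨K.restrict ψ, hψcont.restrict⟩
      have hGK : ∀ t (ht : t ∈ K), G t = ψ t := by
        intro t ht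
        have h := congrFun (congrArg DFunLike.coe hG) ⟨t, ht⟩
        exact h
      refine ⟨G, G.continuous, ?_, ?_⟩
      · rw [hGK 0 h0K, hψ0]
      · funext x
        rw [Function.comp_apply, hGK (f x) (Or.inl ⟨x, rfl⟩), hψf]
  · -- `Cf f ⊆ ⋂₀`
    rintro g ⟨φ, hφ, hφ0, rfl⟩ S ⟨hSc, hfS, hadd, hsmul, hmul, hclosed⟩
    -- powers of f are in S
    have hpow : ∀ n : ℕ, (fun x => f x ^ (n + 1)) ∈ S := by
      intro n
      induction n with
      | zero => simpa [pow_one] using hfS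
      | succ n ih =>
        have := hmul _ ih _ hfS
        convert this using 1
        funext x
        exact pow_succ (f x) (n + 1)
    -- f * p(f) ∈ S for every polynomial p
    have hB : ∀ p : Polynomial ℝ, (fun x => f x * p.eval (f x)) ∈ S := by
      intro p
      induction p using Polynomial.induction_on' with
      | add p q hp hq =>
        have := hadd _ hp _ hq
        convert this using 1
        funext x
        simp [mul_add]
      | monomial n a =>
        have := hsmul a _ (hpow n)
        convert this using 1
        funext x
        simp [Polynomial.eval_monomial, pow_succ]
        ring
    -- p(f) ∈ S for polynomials with zero constant term
    have hq0 : ∀ p : Polynomial ℝ, p.coeff 0 = 0 → (fun x => p.eval (f x)) ∈ S := by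
      intro p hp
      have hXp : Polynomial.X * p.divX = p := by
        have := Polynomial.X_mul_divX_add p
        rwa [hp, map_zero, add_zero] at this
      have := hB p.divX
      convert this using 1
      funext x
      conv_lhs => rw [← hXp]
      simp
    -- apply the closure property
    apply hclosed _ (isCc_comp hf hφ hφ0)
    intro ε hε
    set M : ℝ := unif f with hM
    have hM0 : 0 ≤ M := Real.iSup_nonneg fun x => abs_nonneg _
    have hfM : ∀ x, f x ∈ Set.Icc (-M) M := fun x => abs_le.mp (abs_le_unif hf x)
    have h0M : (0:ℝ) ∈ Set.Icc (-M) M := ⟨neg_nonpos.mpr hM0, hM0⟩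
    obtain ⟨p, hp⟩ := exists_polynomial_near_of_continuousOn (-M) M φ
      hφ.continuousOn (ε / 4) (by positivity)
    set q : Polynomial ℝ := p - Polynomial.C (p.coeff 0) with hq
    have hq0' : q.coeff 0 = 0 := by simp [hq]
    have hqev : ∀ t, q.eval t = p.eval t - p.eval 0 := by
      intro t
      simp [hq, Polynomial.coeff_zero_eq_eval_zero]
    have hqap : ∀ t ∈ Set.Icc (-M) M, |q.eval t - φ t| ≤ ε / 2 := by
      intro t ht
      have h1 := hp t ht
      have h2 := hp 0 h0M
      rw [hφ0, sub_zero] at h2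
      rw [hqev]
      calc |p.eval t - p.eval 0 - φ t| = |(p.eval t - φ t) + (-(p.eval 0))| := by ring_nf
        _ ≤ |p.eval t - φ t| + |(-(p.eval 0))| := abs_add_le _ _
        _ = |p.eval t - φ t| + |p.eval 0| := by rw [abs_neg]
        _ ≤ ε / 4 + ε / 4 := by linarith
        _ = ε / 2 := by ring
    refine ⟨fun x => q.eval (f x), hq0 q hq0', ?_⟩
    have : unif ((φ ∘ f) - fun x => q.eval (f x)) ≤ ε / 2 := by
      apply Real.iSup_le _ (by positivity)
      intro x
      have := hqap (f x) (hfM x)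
      simpa [abs_sub_comm] using this
    linarith
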